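/- Let L ≥ 1, let q_1,…,q_M ∈ Δ^L, let U := conv{q_1,…,q_M}, and let ρ(Z) = max_{q ∈ U} Σ_{j=1}^L q(j) Z(j). Let A_1,…,A_L ∈ ℝ^{n×n}, B_1,…,B_L ∈ ℝ^{n×m}, let Q, R, P be symmetric positive definite, and suppose there exists F ∈ ℝ^{m×n} such that for every l ∈ {1,…,M} the matrix Σ_{j=1}^L q_l(j)(A_j + B_j F)ᵀ P (A_j + B_j F) − P + FᵀRF + Q is negative semidefinite. Define V_0(x) := xᵀPx, V_{h+1}(x) := inf_{u} [xᵀQx + uᵀRu + ρ(j ↦ V_h(A_j x + B_j u))], and fix N ≥ 1. Suppose π : ℝ^n → ℝ^m attains the infimum in the definition of V_N, i.e., V_N(x) = xᵀQx + π(x)ᵀRπ(x) + ρ(j ↦ V_{N−1}(A_j x + B_j π(x))) for all x. Then for every x ∈ ℝ^n: V_N(x) ≥ xᵀQx + π(x)ᵀRπ(x) + ρ(j ↦ V_N(A_j x + B_j π(x))). -/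

import Mathlib

open Matrix

/-- The Lyapunov descent inequality (the paper's chain of inequalities (13)) for the
risk-averse MPC control law `π` attaining the `N`-step value function. -/
theorem stmt_11 (L n m M : ℕ) (hL : 1 ≤ L) (hM : 1 ≤ M)
    (q : Fin M → Fin L → ℝ) (hq : ∀ l, q l ∈ stdSimplex ℝ (Fin L))
    (ρ : (Fin L → ℝ) → ℝ)
    (hρ : ∀ Z : Fin L → ℝ,
      IsGreatest ((fun qq => ∑ j, qq j * Z j) '' (convexHull ℝ (Set.range q))) (ρ Z))
    (A : Fin L → Matrix (Fin n) (Fin n) ℝ) (B : Fin L → Matrix (Fin n) (Fin m) ℝ)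
    (Q P : Matrix (Fin n) (Fin n) ℝ) (R : Matrix (Fin m) (Fin m) ℝ)
    (hQ : Q.PosDef) (hP : P.PosDef) (hR : R.PosDef)
    (F : Matrix (Fin m) (Fin n) ℝ)
    (hlmi : ∀ l : Fin M,
      (-((∑ j, q l j • ((A j + B j * F)ᵀ * P * (A j + B j * F))) - P
          + Fᵀ * R * F + Q)).PosSemidef)
    (V : ℕ → (Fin n → ℝ) → ℝ)
    (hV0 : ∀ x, V 0 x = x ⬝ᵥ (P *ᵥ x))
    (hVs : ∀ (h : ℕ) (x : Fin n → ℝ), V (h + 1) x =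
      ⨅ u : Fin m → ℝ, (x ⬝ᵥ (Q *ᵥ x) + u ⬝ᵥ (R *ᵥ u)
        + ρ (fun j => V h (A j *ᵥ x + B j *ᵥ u))))
    (N : ℕ) (hN : 1 ≤ N)
    (π : (Fin n → ℝ) → (Fin m → ℝ))
    (hπ : ∀ x, V N x = x ⬝ᵥ (Q *ᵥ x) + (π x) ⬝ᵥ (R *ᵥ (π x))
      + ρ (fun j => V (N - 1) (A j *ᵥ x + B j *ᵥ (π x)))) :
    ∀ x : Fin n → ℝ,
      x ⬝ᵥ (Q *ᵥ x) + (π x) ⬝ᵥ (R *ᵥ (π x))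
        + ρ (fun j => V N (A j *ᵥ x + B j *ᵥ (π x))) ≤ V N x := by
  -- basic facts about the convex hull
  have hhull : convexHull ℝ (Set.range q) ⊆ stdSimplex ℝ (Fin L) :=
    convexHull_min (Set.range_subset_iff.2 hq) (convex_stdSimplex ℝ _)
  have hqmem : ∀ l, q l ∈ convexHull ℝ (Set.range q) :=
    fun l => subset_convexHull ℝ _ ⟨l, rfl⟩
  have hρ_le : ∀ (Z qq : Fin L → ℝ), qq ∈ convexHull ℝ (Set.range q) →
      ∑ j, qq j * Z j ≤ ρ Z := fun Z qq h => (hρ Z).2 ⟨qq, h, rfl⟩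
  -- monotonicity of ρ
  have hρ_mono : ∀ Z W : Fin L → ℝ, (∀ j, Z j ≤ W j) → ρ Z ≤ ρ W := by
    intro Z W hzw
    obtain ⟨qq, hqq, hsum⟩ := (hρ Z).1
    rw [← hsum]
    calc ∑ j, qq j * Z j ≤ ∑ j, qq j * W j :=
          Finset.sum_le_sum fun j _ =>
            mul_le_mul_of_nonneg_left (hzw j) ((hhull hqq).1 j)
      _ ≤ ρ W := hρ_le W qq hqq
  -- ρ of a nonnegative vector is nonnegative
  have hρ_nonneg : ∀ Z : Fin L → ℝ, (∀ j, 0 ≤ Z j) → 0 ≤ ρ Z := by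
    intro Z hZ
    have l0 : Fin M := ⟨0, hM⟩
    refine le_trans ?_ (hρ_le Z (q l0) (hqmem l0))
    exact Finset.sum_nonneg fun j _ => mul_nonneg ((hq l0).1 j) (hZ j)
  -- nonnegativity of quadratic forms
  have hQnn : ∀ x : Fin n → ℝ, 0 ≤ x ⬝ᵥ (Q *ᵥ x) := by
    intro x; have := hQ.posSemidef.dotProduct_mulVec_nonneg x; simpa using this
  have hPnn : ∀ x : Fin n → ℝ, 0 ≤ x ⬝ᵥ (P *ᵥ x) := by
    intro x; have := hP.posSemidef.dotProduct_mulVec_nonneg x; simpa using this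
  have hRnn : ∀ u : Fin m → ℝ, 0 ≤ u ⬝ᵥ (R *ᵥ u) := by
    intro u; have := hR.posSemidef.dotProduct_mulVec_nonneg u; simpa using this
  -- nonnegativity of the value functions
  have hVnn : ∀ h (x : Fin n → ℝ), 0 ≤ V h x := by
    intro h
    induction h with
    | zero => intro x; rw [hV0]; exact hPnn x
    | succ h ih =>
      intro x
      rw [hVs h x]
      refine le_ciInf fun u => ?_
      have := hρ_nonneg (fun j => V h (A j *ᵥ x + B j *ᵥ u)) fun j => ih _
      have h1 := hQnn x
      have h2 := hRnn u
      linarith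
  -- the objective is bounded below
  have hbdd : ∀ h (x : Fin n → ℝ), BddBelow (Set.range fun u : Fin m → ℝ =>
      x ⬝ᵥ (Q *ᵥ x) + u ⬝ᵥ (R *ᵥ u) + ρ (fun j => V h (A j *ᵥ x + B j *ᵥ u))) := by
    intro h x
    refine ⟨0, ?_⟩
    rintro _ ⟨u, rfl⟩
    dsimp only
    have := hρ_nonneg (fun j => V h (A j *ᵥ x + B j *ᵥ u)) fun j => hVnn h _
    have h1 := hQnn x
    have h2 := hRnn u
    linarith
  -- quadratic form rewriting
  have hquad : ∀ {k : ℕ} (C : Matrix (Fin k) (Fin n) ℝ) (D : Matrix (Fin k) (Fin k) ℝ)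
      (x : Fin n → ℝ), x ⬝ᵥ ((Cᵀ * D * C) *ᵥ x) = (C *ᵥ x) ⬝ᵥ (D *ᵥ (C *ᵥ x)) := by
    intro k C D x
    rw [← Matrix.mulVec_mulVec, ← Matrix.mulVec_mulVec, Matrix.dotProduct_mulVec,
      Matrix.vecMul_transpose]
  -- the key inequality from the LMI, for every point of the convex hull
  have hkey : ∀ (x : Fin n → ℝ) (qq : Fin L → ℝ), qq ∈ convexHull ℝ (Set.range q) →
      ∑ j, qq j * ((A j *ᵥ x + B j *ᵥ (F *ᵥ x)) ⬝ᵥ (P *ᵥ (A j *ᵥ x + B j *ᵥ (F *ᵥ x))))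
        ≤ x ⬝ᵥ (P *ᵥ x) - x ⬝ᵥ (Q *ᵥ x) - (F *ᵥ x) ⬝ᵥ (R *ᵥ (F *ᵥ x)) := by
    intro x
    set c : Fin L → ℝ := fun j =>
      (A j *ᵥ x + B j *ᵥ (F *ᵥ x)) ⬝ᵥ (P *ᵥ (A j *ᵥ x + B j *ᵥ (F *ᵥ x))) with hc
    set d : ℝ := x ⬝ᵥ (P *ᵥ x) - x ⬝ᵥ (Q *ᵥ x) - (F *ᵥ x) ⬝ᵥ (R *ᵥ (F *ᵥ x)) with hd
    have hconv : Convex ℝ {qq : Fin L → ℝ | ∑ j, qq j * c j ≤ d} := by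
      refine convex_halfSpace_le ?_ d
      constructor
      · intro a b; simp [add_mul, Finset.sum_add_distrib]
      · intro a b; simp [Finset.mul_sum, mul_assoc]
    have hsub : convexHull ℝ (Set.range q) ⊆ {qq : Fin L → ℝ | ∑ j, qq j * c j ≤ d} := by
      refine convexHull_min ?_ hconv
      rintro _ ⟨l, rfl⟩
      have h0 := (hlmi l).dotProduct_mulVec_nonneg x
      simp only [star_trivial] at h0
      have hexp : x ⬝ᵥ ((-((∑ j, q l j • ((A j + B j * F)ᵀ * P * (A j + B j * F))) - P
          + Fᵀ * R * F + Q)) *ᵥ x)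
          = x ⬝ᵥ (P *ᵥ x) - (∑ j, q l j * c j) - x ⬝ᵥ ((Fᵀ * R * F) *ᵥ x)
            - x ⬝ᵥ (Q *ᵥ x) := by
        have hs : x ⬝ᵥ ((∑ j, q l j • ((A j + B j * F)ᵀ * P * (A j + B j * F))) *ᵥ x)
            = ∑ j, q l j * c j := by
          have hms : (∑ j, q l j • ((A j + B j * F)ᵀ * P * (A j + B j * F))) *ᵥ x
              = ∑ j, (q l j • ((A j + B j * F)ᵀ * P * (A j + B j * F))) *ᵥ x :=
            map_sum (Matrix.mulVec.addMonoidHomLeft x) _ Finset.univ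
          rw [hms]
          simp only [Matrix.smul_mulVec]
          have hds : ∀ w : Fin L → Fin n → ℝ, x ⬝ᵥ (∑ j, w j) = ∑ j, x ⬝ᵥ w j := by
            intro w
            simp only [dotProduct, Finset.sum_apply, Finset.mul_sum]
            exact Finset.sum_comm
          rw [hds]
          refine Finset.sum_congr rfl fun j _ => ?_
          rw [dotProduct_smul, smul_eq_mul]
          congr 1
          rw [hquad]
          congr 1 <;> rw [Matrix.add_mulVec, Matrix.mulVec_mulVec]
        simp only [Matrix.neg_mulVec, Matrix.add_mulVec, Matrix.sub_mulVec,
          dotProduct_neg, dotProduct_add, dotProduct_sub, hs]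
        ring
      rw [hexp] at h0
      have hfq : x ⬝ᵥ ((Fᵀ * R * F) *ᵥ x) = (F *ᵥ x) ⬝ᵥ (R *ᵥ (F *ᵥ x)) := hquad F R x
      simp only [Set.mem_setOf_eq, hd]
      linarith [hfq ▸ h0]
    exact fun qq hqq => hsub hqq
  -- V₁ ≤ V₀
  have hdec : ∀ h (x : Fin n → ℝ), V (h + 1) x ≤ V h x := by
    intro h
    induction h with
    | zero =>
      intro x
      rw [hVs 0 x, hV0]
      refine le_trans (ciInf_le (hbdd 0 x) (F *ᵥ x)) ?_
      obtain ⟨qq, hqq, hsum⟩ :=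
        (hρ (fun j => V 0 (A j *ᵥ x + B j *ᵥ (F *ᵥ x)))).1
      rw [← hsum]
      dsimp only
      have := hkey x qq hqq
      have heq : ∑ j, qq j * V 0 (A j *ᵥ x + B j *ᵥ (F *ᵥ x))
          = ∑ j, qq j * ((A j *ᵥ x + B j *ᵥ (F *ᵥ x)) ⬝ᵥ
              (P *ᵥ (A j *ᵥ x + B j *ᵥ (F *ᵥ x)))) :=
        Finset.sum_congr rfl fun j _ => by rw [hV0]
      rw [heq]
      linarith
    | succ h ih =>
      intro x
      rw [hVs (h + 1) x, hVs h x]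
      refine ciInf_mono (hbdd (h + 1) x) fun u => ?_
      exact add_le_add_right (hρ_mono _ _ fun j => ih _) _
  -- conclude
  intro x
  rw [hπ x]
  refine add_le_add_right (hρ_mono _ _ fun j => ?_) _
  have := hdec (N - 1) (A j *ᵥ x + B j *ᵥ (π x))
  rwa [Nat.sub_add_cancel hN] at this
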